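/- Let 𝒞(α) = ℒ(α)ℳ(α) be the CMV matrix of Verblunsky coefficients α = (α₀,α₁,…) ∈ 𝔻^∞, where ℒ(α) = Θ(α₀)⊕Θ(α₂)⊕… and ℳ(α) = 1₁⊕Θ(α₁)⊕Θ(α₃)⊕…. For |λ|=1 and n ≥ 0 let T_{n,λ}(α)_j = α_j for j < n and λα_j for j ≥ n. Define the diagonal unitaries U_{2k-1} = D(1^{2k}(1λ)^∞) and U_{2k} = D(λ^{2k}(1λ)^∞), and Δ_n(λ) = D(1ⁿ λ 1^∞). Then U_n 𝒞(T_{n,λ⁻¹}(α)) U_n⁻¹ = 𝒞(α) Δ_n(λ). -/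

import Mathlib

/-- `ρ(α) = √(1-|α|²)` as a complex number. -/
noncomputable def cmvRho (a : ℂ) : ℂ := (Real.sqrt (1 - ‖a‖ ^ 2) : ℝ)

/-- The operator `ℒ(α) = Θ(α₀) ⊕ Θ(α₂) ⊕ ⋯` acting on sequences. -/
noncomputable def cmvL (α : ℕ → ℂ) (x : ℕ → ℂ) : ℕ → ℂ := fun j =>
  if j % 2 = 0 then starRingEnd ℂ (α j) * x j + cmvRho (α j) * x (j + 1)
  else cmvRho (α (j - 1)) * x (j - 1) - α (j - 1) * x j

/-- The operator `ℳ(α) = 1₁ ⊕ Θ(α₁) ⊕ Θ(α₃) ⊕ ⋯` acting on sequences. -/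
noncomputable def cmvM (α : ℕ → ℂ) (x : ℕ → ℂ) : ℕ → ℂ := fun j =>
  if j = 0 then x 0
  else if j % 2 = 1 then starRingEnd ℂ (α j) * x j + cmvRho (α j) * x (j + 1)
  else cmvRho (α (j - 1)) * x (j - 1) - α (j - 1) * x j

/-- The CMV operator `𝒞(α) = ℒ(α)ℳ(α)`. -/
noncomputable def cmv (α : ℕ → ℂ) (x : ℕ → ℂ) : ℕ → ℂ := cmvL α (cmvM α x)

/-- `T_{n,λ}(α)_j = α_j` for `j < n` and `λ α_j` for `j ≥ n`. -/
def cmvT (n : ℕ) (l : ℂ) (α : ℕ → ℂ) : ℕ → ℂ := fun j => if j < n then α j else l * α j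

/-- The diagonal of the unitary `U_n`: `U_{2k-1} = D(1^{2k}(1λ)^∞)`,
`U_{2k} = D(λ^{2k}(1λ)^∞)`. -/
def cmvUdiag (n : ℕ) (l : ℂ) : ℕ → ℂ := fun j =>
  if n % 2 = 0 then (if j < n ∨ j % 2 = 1 then l else 1)
  else (if n < j ∧ j % 2 = 1 then l else 1)

/-- The diagonal of `Δ_n(λ) = D(1ⁿ λ 1^∞)`. -/
def cmvDelta (n : ℕ) (l : ℂ) : ℕ → ℂ := fun j => if j = n then l else 1

/-- The auxiliary gauge diagonal `W` such that `U ℒ' = ℒ W` and `W ℳ' = ℳ Δ U`. -/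
def cmvW (n : ℕ) (l : ℂ) : ℕ → ℂ := fun j =>
  if n % 2 = 0 then (if j < n ∨ j % 2 = 0 then l else 1)
  else (if n < j ∧ j % 2 = 0 then l else 1)

lemma cmv_rho_T {lam : ℂ} (hlam : ‖lam‖ = 1) (α : ℕ → ℂ) (n j : ℕ) :
    cmvRho (cmvT n lam⁻¹ α j) = cmvRho (α j) := by
  unfold cmvT cmvRho
  split_ifs with h
  · rfl
  · rw [norm_mul, norm_inv, hlam, inv_one, one_mul]

lemma cmvL_gauge {lam : ℂ} (hlam : ‖lam‖ = 1) (α : ℕ → ℂ) (n : ℕ) (y : ℕ → ℂ) (j : ℕ) :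
    cmvUdiag n lam j * cmvL (cmvT n lam⁻¹ α) y j
      = cmvL α (fun i => cmvW n lam i * y i) j := by
  have hl0 : lam ≠ 0 := by intro h; simp [h] at hlam
  have hcl : (starRingEnd ℂ) lam = lam⁻¹ := by
    rw [Complex.inv_def, Complex.normSq_eq_norm_sq, hlam]
    simp
  have hcli : (starRingEnd ℂ) lam⁻¹ = lam := by rw [map_inv₀, hcl, inv_inv]
  simp only [cmvL, cmv_rho_T hlam]
  split_ifs with hj
  · have ha : cmvUdiag n lam j * (starRingEnd ℂ) (cmvT n lam⁻¹ α j)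
        = (starRingEnd ℂ) (α j) * cmvW n lam j := by
      simp only [cmvUdiag, cmvW, cmvT, apply_ite (starRingEnd ℂ), map_mul, hcli]
      split_ifs <;> first | omega | ring1
    have hb : cmvUdiag n lam j = cmvW n lam (j + 1) := by
      simp only [cmvUdiag, cmvW]
      split_ifs <;> first | omega | ring1
    linear_combination (y j) * ha + (cmvRho (α j) * y (j + 1)) * hb
  · have hc : cmvUdiag n lam j = cmvW n lam (j - 1) := by
      simp only [cmvUdiag, cmvW]
      split_ifs <;> first | omega | ring1
    have hd : cmvUdiag n lam j * cmvT n lam⁻¹ α (j - 1) = α (j - 1) * cmvW n lam j := by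
      simp only [cmvUdiag, cmvW, cmvT]
      split_ifs <;> first | omega | ring1 | (field_simp [hl0] <;> ring1)
    linear_combination (cmvRho (α (j - 1)) * y (j - 1)) * hc - (y j) * hd

lemma cmvM_gauge {lam : ℂ} (hlam : ‖lam‖ = 1) (α : ℕ → ℂ) (n : ℕ) (x : ℕ → ℂ) (j : ℕ) :
    cmvW n lam j * cmvM (cmvT n lam⁻¹ α) (fun i => (cmvUdiag n lam i)⁻¹ * x i) j
      = cmvM α (fun i => cmvDelta n lam i * x i) j := by
  have hl0 : lam ≠ 0 := by intro h; simp [h] at hlam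
  have hcl : (starRingEnd ℂ) lam = lam⁻¹ := by
    rw [Complex.inv_def, Complex.normSq_eq_norm_sq, hlam]
    simp
  have hcli : (starRingEnd ℂ) lam⁻¹ = lam := by rw [map_inv₀, hcl, inv_inv]
  simp only [cmvM, cmv_rho_T hlam]
  split_ifs with h0 hj
  · subst h0
    have e0 : cmvW n lam 0 * (cmvUdiag n lam 0)⁻¹ = cmvDelta n lam 0 := by
      simp only [cmvUdiag, cmvW, cmvDelta]
      split_ifs <;> first | omega | ring1 | (field_simp [hl0] <;> ring1) | (simp_all [hl0] <;> omega) | simp_all [hl0]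
    linear_combination (x 0) * e0
  · have e3 : cmvW n lam j * (starRingEnd ℂ) (cmvT n lam⁻¹ α j) * (cmvUdiag n lam j)⁻¹
        = (starRingEnd ℂ) (α j) * cmvDelta n lam j := by
      simp only [cmvUdiag, cmvW, cmvT, cmvDelta, apply_ite (starRingEnd ℂ), map_mul, hcli]
      split_ifs <;> first | omega | ring1 | (field_simp [hl0] <;> ring1) | (simp_all [hl0] <;> omega) | simp_all [hl0]
    have e4 : cmvW n lam j * (cmvUdiag n lam (j + 1))⁻¹ = cmvDelta n lam (j + 1) := by
      simp only [cmvUdiag, cmvW, cmvDelta]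
      split_ifs <;> first | omega | ring1 | (field_simp [hl0] <;> ring1) | (simp_all [hl0] <;> omega) | simp_all [hl0]
    linear_combination (x j) * e3 + (cmvRho (α j) * x (j + 1)) * e4
  · have e1 : cmvW n lam j * (cmvUdiag n lam (j - 1))⁻¹ = cmvDelta n lam (j - 1) := by
      simp only [cmvUdiag, cmvW, cmvDelta]
      split_ifs <;> first | omega | ring1 | (field_simp [hl0] <;> ring1) | (simp_all [hl0] <;> omega) | simp_all [hl0]
    have e2 : cmvW n lam j * cmvT n lam⁻¹ α (j - 1) * (cmvUdiag n lam j)⁻¹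
        = α (j - 1) * cmvDelta n lam j := by
      simp only [cmvUdiag, cmvW, cmvT, cmvDelta]
      split_ifs <;> first | omega | ring1 | (field_simp [hl0] <;> ring1) | (simp_all [hl0] <;> omega) | simp_all [hl0]
    linear_combination (cmvRho (α (j - 1)) * x (j - 1)) * e1 - (x j) * e2

/-- Theorem 5.1: `U_n 𝒞(T_{n,λ⁻¹}(α)) U_n⁻¹ = 𝒞(α) Δ_n(λ)`. -/
theorem cmv_rankOne_conjugation
    (α : ℕ → ℂ) (hα : ∀ j, ‖α j‖ < 1) (lam : ℂ) (hlam : ‖lam‖ = 1) (n : ℕ) :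
    ∀ x : ℕ → ℂ,
      (fun j => cmvUdiag n lam j *
        cmv (cmvT n lam⁻¹ α) (fun i => (cmvUdiag n lam i)⁻¹ * x i) j)
      = cmv α (fun i => cmvDelta n lam i * x i) := by
  intro x
  funext j
  show cmvUdiag n lam j *
      cmvL (cmvT n lam⁻¹ α) (cmvM (cmvT n lam⁻¹ α) (fun i => (cmvUdiag n lam i)⁻¹ * x i)) j
    = cmvL α (cmvM α (fun i => cmvDelta n lam i * x i)) j
  rw [cmvL_gauge hlam α n _ j]
  congr 1
  funext i
  exact cmvM_gauge hlam α n x i
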